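/- Let L and K be symmetric positive semidefinite real N×N matrices and let μ > 0 (so that μ⁻¹I + LK is invertible). Then for every vector v ∈ ℝᴺ, vᵀ (μ⁻¹I + LK)⁻¹ L v ≥ 0. Consequently, the manifold-regularized kernel satisfies k̃(x,x) = k(x,x) − k_xᵀ(μ⁻¹I + LK)⁻¹ L k_x ≤ k(x,x) for every point x. -/

import Mathlib

open Matrix

/-- For symmetric positive semidefinite `L`, `K` and `μ > 0`, the quadratic form
`v ↦ vᵀ (μ⁻¹ I + L K)⁻¹ L v` is nonnegative; consequently the manifold-regularized
kernel diagonal `k̃(x,x) = k(x,x) - k_xᵀ (μ⁻¹ I + L K)⁻¹ L k_x` never exceeds `k(x,x)`,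
where `K` is the Gram matrix of `k` on the points `x₁, …, x_N`. -/
theorem stmt10 {N : ℕ} {X : Type*} (xs : Fin N → X) (k : X → X → ℝ)
    (L K : Matrix (Fin N) (Fin N) ℝ)
    (hL : L.PosSemidef) (hK : K.PosSemidef)
    (hKgram : ∀ i j, K i j = k (xs i) (xs j))
    (μ : ℝ) (hμ : 0 < μ)
    (M : Matrix (Fin N) (Fin N) ℝ)
    (hM : M = μ⁻¹ • (1 : Matrix (Fin N) (Fin N) ℝ) + L * K) :
    (∀ v : Fin N → ℝ, 0 ≤ v ⬝ᵥ M⁻¹ *ᵥ (L *ᵥ v)) ∧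
    (∀ (x : X) (kx : Fin N → ℝ), (∀ i, kx i = k (xs i) x) →
      k x x - kx ⬝ᵥ M⁻¹ *ᵥ (L *ᵥ kx) ≤ k x x) := by
  -- square root of L
  obtain ⟨S, hSps, hSS⟩ : ∃ S : Matrix (Fin N) (Fin N) ℝ, S.PosSemidef ∧ S * S = L :=
    open MatrixOrder in
      ⟨CFC.sqrt L, (CFC.sqrt_nonneg L).posSemidef, CFC.sqrt_mul_sqrt_self L hL.nonneg⟩
  have hSH : Sᴴ = S := hSps.1
  have hSKS : (S * K * S).PosSemidef := by
    have := hK.mul_mul_conjTranspose_same S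
    rwa [hSH] at this
  have hI : (μ⁻¹ • (1 : Matrix (Fin N) (Fin N) ℝ)).PosDef := by
    refine Matrix.PosDef.of_dotProduct_mulVec_pos ?_ (fun x hx => ?_)
    · simp [IsHermitian, conjTranspose_smul, conjTranspose_one]
    · have h : (μ⁻¹ • (1 : Matrix (Fin N) (Fin N) ℝ)) *ᵥ x = μ⁻¹ • x := by
        simp [smul_mulVec]
      rw [h, dotProduct_smul]
      have hx2 : 0 < star x ⬝ᵥ x := dotProduct_star_self_pos_iff.mpr hx
      exact smul_pos (inv_pos.mpr hμ) hx2
  set N₀ : Matrix (Fin N) (Fin N) ℝ :=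
    μ⁻¹ • (1 : Matrix (Fin N) (Fin N) ℝ) + S * K * S with hN₀
  have hN₀pd : N₀.PosDef := Matrix.PosDef.add_posSemidef hI hSKS
  have hN₀det : IsUnit N₀.det := isUnit_iff_ne_zero.mpr hN₀pd.det_pos.ne'
  -- det M = det N₀ ≠ 0, via Weinstein–Aronszajn
  have hdet : M.det = N₀.det := by
    have h1 : M = μ⁻¹ • ((1 : Matrix (Fin N) (Fin N) ℝ) + S * (μ • (S * K))) := by
      rw [hM, smul_add, Matrix.mul_smul, smul_smul, inv_mul_cancel₀ hμ.ne',
        one_smul, ← Matrix.mul_assoc, hSS]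
    have h2 : N₀ = μ⁻¹ • ((1 : Matrix (Fin N) (Fin N) ℝ) + (μ • (S * K)) * S) := by
      rw [hN₀, smul_add, Matrix.smul_mul, smul_smul, inv_mul_cancel₀ hμ.ne',
        one_smul, Matrix.mul_assoc]
    rw [h1, h2, det_smul, det_smul, det_one_add_mul_comm]
  have hMdet : IsUnit M.det := hdet ▸ hN₀det
  -- key identity : M⁻¹ * L = S * N₀⁻¹ * S
  have hMS : M * S = S * N₀ := by
    rw [hM, hN₀, Matrix.add_mul, Matrix.mul_add, Matrix.smul_mul, Matrix.mul_smul,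
      Matrix.one_mul, Matrix.mul_one]
    congr 1
    rw [← hSS]
    noncomm_ring
  have hMP : M * (S * N₀⁻¹ * S) = L := by
    calc M * (S * N₀⁻¹ * S) = (M * S) * N₀⁻¹ * S := by
          rw [← Matrix.mul_assoc, ← Matrix.mul_assoc]
      _ = S * (N₀ * N₀⁻¹) * S := by rw [hMS, Matrix.mul_assoc S N₀ N₀⁻¹]
      _ = S * S := by rw [mul_nonsing_inv _ hN₀det, Matrix.mul_one]
      _ = L := hSS
  have hkey : M⁻¹ * L = S * N₀⁻¹ * S := by
    calc M⁻¹ * L = M⁻¹ * (M * (S * N₀⁻¹ * S)) := by rw [hMP]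
      _ = (M⁻¹ * M) * (S * N₀⁻¹ * S) := (Matrix.mul_assoc _ _ _).symm
      _ = S * N₀⁻¹ * S := by rw [nonsing_inv_mul _ hMdet, Matrix.one_mul]
  have hNinvPsd : N₀⁻¹.PosSemidef := hN₀pd.inv.posSemidef
  have main : ∀ v : Fin N → ℝ, 0 ≤ v ⬝ᵥ M⁻¹ *ᵥ (L *ᵥ v) := by
    intro v
    have h1 : M⁻¹ *ᵥ (L *ᵥ v) = (M⁻¹ * L) *ᵥ v := mulVec_mulVec _ _ _
    rw [h1, hkey, ← mulVec_mulVec, ← mulVec_mulVec]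
    have hST : Sᵀ = S := by
      have := hSps.1.eq
      simpa [conjTranspose_eq_transpose_of_trivial] using this
    have h2 : v ᵥ* S = S *ᵥ v := by
      calc v ᵥ* S = v ᵥ* Sᵀ := by rw [hST]
        _ = S *ᵥ v := vecMul_transpose S v
    have h3 : v ⬝ᵥ S *ᵥ (N₀⁻¹ *ᵥ (S *ᵥ v)) = (S *ᵥ v) ⬝ᵥ (N₀⁻¹ *ᵥ (S *ᵥ v)) := by
      rw [dotProduct_mulVec v S, h2]
    rw [h3]
    simpa using hNinvPsd.dotProduct_mulVec_nonneg (S *ᵥ v)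
  refine ⟨main, fun x kx _ => ?_⟩
  linarith [main kx]
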